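/- arXiv:1901.05843 — 2 statements merged into one kernel-verified Lean document; each statement's English description precedes it below -/
import Mathlib

section
/- (Series form of the transience criterion for the perturbed reflected random walk.) Let (α_n) be a sequence of real numbers with 0 < α_n < min{C, n/2} for all n ≥ 1, for some constant C > 0, and set λ_n = 1/2 + α_n/n and μ_n = 1/2 − α_n/n. Suppose there exist a constant c > 1, an integer K ≥ 1 and an index n_0 such that for all n > n_0, α_n ≥ (1/4)·(1 + ∑_{k=1}^{K-1} 1/(∏_{j=1}^{k} ln_{(j)} n) + c/(∏_{j=1}^{K} ln_{(j)} n)). Then the series ∑_{n=1}^∞ ∏_{k=1}^{n} (μ_k/λ_k) converges (equivalently, the associated reflected random walk with upward step probability 1/2 + α_{S_t}/S_t at state S_t > 0 is transient). -/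
open Filter Finset Real

/-! ### Auxiliary definitions and lemmas on iterated logarithms -/

/-- The product `∏_{j=1}^{i} ln_{(j)} x` of iterated logarithms. -/
noncomputable def LP (i : ℕ) (x : ℝ) : ℝ := ∏ j ∈ Finset.Icc 1 i, Real.log^[j] x

/-- `x` is `m`-good if all iterated logs up to order `m` are at least `1`. -/
def Good (m : ℕ) (a : ℝ) : Prop := ∀ j, j ≤ m → 1 ≤ Real.log^[j] a

noncomputable def GG (K : ℕ) (c : ℝ) (x : ℝ) : ℝ :=
  ∑ i ∈ Finset.Icc 1 K, Real.log^[i] x + c * Real.log^[K+1] x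

noncomputable def qq (K : ℕ) (c : ℝ) (x : ℝ) : ℝ :=
  (Real.log^[K] x) ^ (-c) / (x * LP (K-1) x)

noncomputable def ff (K : ℕ) (c : ℝ) (a : ℝ) : ℝ :=
  (1/a) * (1 + ∑ j ∈ Finset.Icc 1 (K-1), 1 / LP j a + c / LP K a)

lemma itlog_tendsto (j : ℕ) : Tendsto (Real.log^[j]) atTop atTop := by
  induction j with
  | zero => simpa using tendsto_id
  | succ n ih => rw [Function.iterate_succ']; exact Real.tendsto_log_atTop.comp ih

lemma itlog_mono {a b : ℝ} (hab : a ≤ b) : ∀ j, (∀ i < j, 1 ≤ Real.log^[i] a) →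
    Real.log^[j] a ≤ Real.log^[j] b := by
  intro j
  induction j with
  | zero => intro _; simpa using hab
  | succ n ih =>
    intro hi
    rw [Function.iterate_succ']
    exact Real.log_le_log (lt_of_lt_of_le one_pos (hi n (Nat.lt_succ_self n)))
      (ih fun i hin => hi i (hin.trans (Nat.lt_succ_self n)))

lemma LP_ge_one {i : ℕ} {x : ℝ} (hx : ∀ j, j ≤ i → 1 ≤ Real.log^[j] x) : 1 ≤ LP i x := by
  rw [LP]
  calc (1:ℝ) = ∏ j ∈ Finset.Icc 1 i, 1 := by simp
  _ ≤ _ := Finset.prod_le_prod (by simp) (fun j hj => hx j (Finset.mem_Icc.mp hj).2)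

lemma LP_pos {i : ℕ} {x : ℝ} (hx : ∀ j, j ≤ i → 1 ≤ Real.log^[j] x) : 0 < LP i x :=
  lt_of_lt_of_le one_pos (LP_ge_one hx)

lemma LP_mono {i : ℕ} {a b : ℝ} (hab : a ≤ b) (ha : ∀ j, j ≤ i → 1 ≤ Real.log^[j] a) :
    LP i a ≤ LP i b := by
  refine Finset.prod_le_prod (fun j hj => ?_) (fun j hj => ?_)
  · exact le_trans zero_le_one (ha j (Finset.mem_Icc.mp hj).2)
  · exact itlog_mono hab j (fun k hk => ha k (le_of_lt (hk.trans_le (Finset.mem_Icc.mp hj).2)))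

lemma LP_succ (i : ℕ) (x : ℝ) : LP (i+1) x = LP i x * Real.log^[i+1] x :=
  Finset.prod_Icc_succ_top (Nat.le_add_left 1 i) _

lemma itlog_hasDeriv {i : ℕ} {x : ℝ} (hx : ∀ j, j ≤ i → 1 ≤ Real.log^[j] x) :
    HasDerivAt (Real.log^[i+1]) (1 / (x * LP i x)) x := by
  induction i with
  | zero =>
    have hx0 : (1:ℝ) ≤ x := by simpa using hx 0 le_rfl
    have hd := Real.hasDerivAt_log (by positivity : x ≠ 0)
    have : Real.log^[0+1] = Real.log := by simp
    rw [this]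
    convert hd using 1
    simp [LP, one_div]
  | succ n ih =>
    have h1 := ih (fun j hj => hx j (hj.trans (Nat.le_succ n)))
    have hpos : (1:ℝ) ≤ Real.log^[n+1] x := hx (n+1) le_rfl
    have h2 := Real.hasDerivAt_log (by positivity : Real.log^[n+1] x ≠ 0)
    have h3 := h2.comp x h1
    rw [← Function.iterate_succ'] at h3
    refine h3.congr_deriv ?_
    rw [LP_succ]
    have hx0 : (1:ℝ) ≤ x := by simpa using hx 0 (Nat.zero_le _)
    have hL : 0 < LP n x := LP_pos (fun j hj => hx j (hj.trans (Nat.le_succ n)))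
    field_simp

lemma good_mono {m : ℕ} {a b : ℝ} (ha : Good m a) (hab : a ≤ b) : Good m b :=
  fun j hj => le_trans (ha j hj) (itlog_mono hab j (fun i hi => ha i (le_of_lt (hi.trans_le hj))))

lemma good_le {m m' : ℕ} {a : ℝ} (h : m' ≤ m) (ha : Good m a) : Good m' a :=
  fun j hj => ha j (hj.trans h)

lemma xLP_pos {i : ℕ} {a : ℝ} (ha : Good i a) : 0 < a * LP i a :=
  mul_pos (lt_of_lt_of_le one_pos (by simpa using ha 0 (Nat.zero_le _))) (LP_pos ha)

lemma xLP_mono {i : ℕ} {a b : ℝ} (ha : Good i a) (hab : a ≤ b) : a * LP i a ≤ b * LP i b := by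
  have h1 : (1:ℝ) ≤ a := by simpa using ha 0 (Nat.zero_le _)
  exact mul_le_mul hab (LP_mono hab ha) (le_of_lt (LP_pos ha)) (by linarith)

/-- step bound for increments of iterated logs, by the mean value theorem -/
lemma itlog_step {i : ℕ} {a : ℝ} (ha : Good i a) :
    Real.log^[i+1] (a+1) - Real.log^[i+1] a ≤ 1 / (a * LP i a) := by
  obtain ⟨ξ, hξ, hslope⟩ := exists_hasDerivAt_eq_slope (Real.log^[i+1])
    (fun x => 1 / (x * LP i x)) (by linarith : a < a + 1)
    (fun x hx => (itlog_hasDeriv (good_mono ha hx.1)).continuousAt.continuousWithinAt)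
    (fun x hx => itlog_hasDeriv (good_mono ha (le_of_lt hx.1)))
  have h1 : Real.log^[i+1] (a+1) - Real.log^[i+1] a = 1 / (ξ * LP i ξ) := by
    rw [hslope]; ring_nf
  rw [h1]
  exact one_div_le_one_div_of_le (xLP_pos ha) (xLP_mono ha (le_of_lt hξ.1))

lemma H_hasDeriv (K : ℕ) (c : ℝ) (hK : 1 ≤ K) {x : ℝ} (hx : Good K x) :
    HasDerivAt (fun y => (Real.log^[K] y) ^ (1-c)) (-((c-1) * qq K c x)) x := by
  have hK1 : K - 1 + 1 = K := Nat.succ_pred_eq_of_pos hK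
  have h1 : HasDerivAt (Real.log^[K]) (1 / (x * LP (K-1) x)) x := by
    have := itlog_hasDeriv (i := K-1) (x := x) (fun j hj => hx j (hj.trans (Nat.sub_le K 1)))
    rwa [hK1] at this
  have hne : Real.log^[K] x ≠ 0 := by
    have := hx K le_rfl; positivity
  have h2 := h1.rpow_const (p := 1-c) (Or.inl hne)
  convert h2 using 1
  have : (1:ℝ) - c - 1 = -c := by ring
  rw [this, qq]
  field_simp
  ring

lemma qq_pos (K : ℕ) (c : ℝ) {x : ℝ} (hx : Good K x) : 0 < qq K c x := by
  have h1 : (0:ℝ) < Real.log^[K] x := lt_of_lt_of_le one_pos (hx K le_rfl)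
  have h2 := xLP_pos (i := K-1) (good_le (Nat.sub_le K 1) hx)
  exact div_pos (Real.rpow_pos_of_pos h1 _) h2

lemma qq_antitone (K : ℕ) (c : ℝ) (hc : 0 ≤ c) {a b : ℝ} (ha : Good K a) (hab : a ≤ b) :
    qq K c b ≤ qq K c a := by
  have hu : (1:ℝ) ≤ Real.log^[K] a := ha K le_rfl
  have hv : Real.log^[K] a ≤ Real.log^[K] b :=
    itlog_mono hab K (fun i hi => ha i (le_of_lt hi))
  have hnum : (Real.log^[K] b) ^ (-c) ≤ (Real.log^[K] a) ^ (-c) := by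
    rw [Real.rpow_neg (by linarith), Real.rpow_neg (by linarith)]
    have h1 : (0:ℝ) < (Real.log^[K] a) ^ c := Real.rpow_pos_of_pos (by linarith) _
    have h2 : (Real.log^[K] a) ^ c ≤ (Real.log^[K] b) ^ c :=
      Real.rpow_le_rpow (by linarith) hv hc
    exact inv_anti₀ h1 h2
  have hga := good_le (Nat.sub_le K 1) ha
  exact div_le_div₀ (le_of_lt (Real.rpow_pos_of_pos (by linarith) _)) hnum
    (xLP_pos hga) (xLP_mono hga hab)

/-- step bound for `(ln_{(K)} ·)^{1-c}`, by the mean value theorem -/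
lemma H_step (K : ℕ) (c : ℝ) (hK : 1 ≤ K) (hc : 1 < c) {a : ℝ} (ha : Good K a) :
    (c - 1) * qq K c (a+1) ≤
      (Real.log^[K] a) ^ (1-c) - (Real.log^[K] (a+1)) ^ (1-c) := by
  obtain ⟨ξ, hξ, hslope⟩ := exists_hasDerivAt_eq_slope (fun y => (Real.log^[K] y) ^ (1-c))
    (fun x => -((c-1) * qq K c x)) (by linarith : a < a + 1)
    (fun x hx => (H_hasDeriv K c hK (good_mono ha hx.1)).continuousAt.continuousWithinAt)
    (fun x hx => H_hasDeriv K c hK (good_mono ha (le_of_lt hx.1)))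
  have h1 : (Real.log^[K] a) ^ (1-c) - (Real.log^[K] (a+1)) ^ (1-c) = (c-1) * qq K c ξ := by
    have := hslope
    field_simp at this
    linarith
  rw [h1]
  have := qq_antitone K c (by linarith) (good_mono ha (le_of_lt hξ.1))
    (by linarith [hξ.2] : ξ ≤ a + 1)
  nlinarith [this]

lemma sum_shift (u : ℕ → ℝ) : ∀ m : ℕ, 1 ≤ m →
    ∑ i ∈ Finset.Icc 1 m, u (i-1) = u 0 + ∑ j ∈ Finset.Icc 1 (m-1), u j := by
  intro m
  induction m with
  | zero => omega
  | succ n ih =>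
    intro _
    rcases Nat.eq_zero_or_pos n with hn | hn
    · subst hn; simp
    · rw [Finset.sum_Icc_succ_top (by omega), ih hn, Nat.add_sub_cancel,
        ← Nat.succ_pred_eq_of_pos hn, Finset.sum_Icc_succ_top (by omega),
        Nat.succ_pred_eq_of_pos hn]
      rw [Nat.pred_eq_sub_one, Nat.sub_add_cancel hn]
      ring

lemma prod_shift (u : ℕ → ℝ) : ∀ m : ℕ, 1 ≤ m →
    ∏ i ∈ Finset.Icc 1 m, u (i-1) = u 0 * ∏ j ∈ Finset.Icc 1 (m-1), u j := by
  intro m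
  induction m with
  | zero => omega
  | succ n ih =>
    intro _
    rcases Nat.eq_zero_or_pos n with hn | hn
    · subst hn; simp
    · rw [Finset.prod_Icc_succ_top (by omega), ih hn, Nat.add_sub_cancel,
        ← Nat.succ_pred_eq_of_pos hn, Finset.prod_Icc_succ_top (by omega),
        Nat.succ_pred_eq_of_pos hn]
      rw [Nat.pred_eq_sub_one, Nat.sub_add_cancel hn]
      ring

lemma GG_step (K : ℕ) (c : ℝ) (hK : 1 ≤ K) (hc : 0 ≤ c) {a : ℝ} (ha : Good K a) :
    GG K c (a+1) - GG K c a ≤ ff K c a := by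
  have ha0 : (0:ℝ) < a := lt_of_lt_of_le one_pos (by simpa using ha 0 (Nat.zero_le _))
  have hstep : ∀ i ∈ Finset.Icc 1 K,
      Real.log^[i] (a+1) - Real.log^[i] a ≤ 1 / (a * LP (i-1) a) := by
    intro i hi
    obtain ⟨hi1, hi2⟩ := Finset.mem_Icc.mp hi
    have h1 : i - 1 + 1 = i := Nat.succ_pred_eq_of_pos hi1
    have := itlog_step (i := i-1) (a := a) (good_le (by omega) ha)
    rwa [h1] at this
  have hsum : ∑ i ∈ Finset.Icc 1 K, (Real.log^[i] (a+1) - Real.log^[i] a)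
      ≤ ∑ i ∈ Finset.Icc 1 K, 1 / (a * LP (i-1) a) := Finset.sum_le_sum hstep
  have htop : c * (Real.log^[K+1] (a+1) - Real.log^[K+1] a) ≤ c * (1 / (a * LP K a)) :=
    mul_le_mul_of_nonneg_left (itlog_step ha) hc
  have hshift : ∑ i ∈ Finset.Icc 1 K, 1 / (a * LP (i-1) a)
      = 1/a + ∑ j ∈ Finset.Icc 1 (K-1), 1 / (a * LP j a) := by
    have := sum_shift (fun j => 1 / (a * LP j a)) K hK
    simpa [LP] using this
  have hLKpos : 0 < LP K a := LP_pos ha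
  have hexp : 1/a + ∑ j ∈ Finset.Icc 1 (K-1), 1 / (a * LP j a) + c * (1 / (a * LP K a))
      = ff K c a := by
    rw [ff]
    have : ∀ j ∈ Finset.Icc 1 (K-1), 1 / (a * LP j a) = (1/a) * (1 / LP j a) := by
      intro j hj
      rw [one_div, mul_inv, one_div, one_div]
    rw [Finset.sum_congr rfl this, ← Finset.mul_sum]
    field_simp
  have hGG : GG K c (a+1) - GG K c a
      = ∑ i ∈ Finset.Icc 1 K, (Real.log^[i] (a+1) - Real.log^[i] a)
        + c * (Real.log^[K+1] (a+1) - Real.log^[K+1] a) := by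
    rw [GG, GG, Finset.sum_sub_distrib]
    ring
  rw [hGG, ← hexp]
  linarith

lemma exp_neg_GG (K : ℕ) (c : ℝ) (hK : 1 ≤ K) {x : ℝ} (hx : Good K x) :
    Real.exp (-(GG K c x)) = qq K c x := by
  have hpos : ∀ j, j ≤ K → (0:ℝ) < Real.log^[j] x := fun j hj => lt_of_lt_of_le one_pos (hx j hj)
  have h1 : Real.exp (∑ i ∈ Finset.Icc 1 K, Real.log^[i] x) = x * LP (K-1) x := by
    rw [Real.exp_sum]
    have h2 : ∀ i ∈ Finset.Icc 1 K, Real.exp (Real.log^[i] x) = Real.log^[i-1] x := by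
      intro i hi
      obtain ⟨hi1, hi2⟩ := Finset.mem_Icc.mp hi
      have h3 : i - 1 + 1 = i := Nat.succ_pred_eq_of_pos hi1
      rw [← h3, Function.iterate_succ_apply', Real.exp_log (hpos (i-1) (by omega))]
      simp
    rw [Finset.prod_congr rfl h2, prod_shift (fun j => Real.log^[j] x) K hK]
    simp [LP]
  have h4 : Real.exp (c * Real.log^[K+1] x) = (Real.log^[K] x) ^ c := by
    rw [Real.rpow_def_of_pos (hpos K le_rfl), Function.iterate_succ_apply', mul_comm]
  rw [GG, Real.exp_neg, Real.exp_add, h1, h4, qq]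
  rw [Real.rpow_neg (le_of_lt (hpos K le_rfl))]
  have h5 : (0:ℝ) < x * LP (K-1) x := xLP_pos (good_le (Nat.sub_le K 1) hx)
  have h6 : (0:ℝ) < (Real.log^[K] x) ^ c := Real.rpow_pos_of_pos (hpos K le_rfl) _
  field_simp

lemma ratio_le_exp {x : ℝ} (h0 : 0 ≤ x) (h1 : x < 1) :
    (1 - x) / (1 + x) ≤ Real.exp (-(2*x) + 2*x^2) := by
  have hx1 : (0:ℝ) < 1 + x := by linarith
  have key : (1 - x)/(1+x) = 1 - 2*x/(1+x) := by field_simp; ring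
  have h2 : 1 - 2*x/(1+x) ≤ Real.exp (-(2*x/(1+x))) := by
    have := Real.add_one_le_exp (-(2*x/(1+x))); linarith
  have h3 : -(2*x/(1+x)) ≤ -(2*x) + 2*x^2 := by
    have expand : -(2*x/(1+x)) = (-(2*x))/(1+x) := by ring
    rw [expand, div_le_iff₀ hx1]
    nlinarith [pow_nonneg h0 3]
  rw [key]
  exact h2.trans (Real.exp_le_exp.mpr h3)

/-- **Series form of the transience criterion for the perturbed reflected random
walk**, with `λ_n = 1/2 + α_n/n` and `μ_n = 1/2 - α_n/n`.
Here `Real.log^[k]` is the `k`-th iterate of `Real.log`. -/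
theorem random_walk_transient
    (α : ℕ → ℝ) (C : ℝ) (hC : 0 < C)
    (hα : ∀ n : ℕ, 1 ≤ n → 0 < α n ∧ α n < min C ((n : ℝ) / 2))
    (lam mu : ℕ → ℝ)
    (hlam : ∀ n : ℕ, lam n = 1 / 2 + α n / (n : ℝ))
    (hmu : ∀ n : ℕ, mu n = 1 / 2 - α n / (n : ℝ))
    (c : ℝ) (hc : 1 < c) (K : ℕ) (hK : 1 ≤ K) (n₀ : ℕ)
    (h : ∀ n > n₀,
      α n ≥ (1 / 4) *
        (1 + ∑ k ∈ Finset.Icc 1 (K - 1),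
              1 / ∏ j ∈ Finset.Icc 1 k, Real.log^[j] (n : ℝ)
           + c / ∏ j ∈ Finset.Icc 1 K, Real.log^[j] (n : ℝ))) :
    Summable (fun n : ℕ => ∏ k ∈ Finset.Icc 1 n, mu k / lam k) := by
  set P : ℕ → ℝ := fun n => ∏ k ∈ Finset.Icc 1 n, mu k / lam k with hPdef
  -- positivity of the factors
  have hfac : ∀ k : ℕ, 1 ≤ k → 0 ≤ mu k / lam k := by
    intro k hk
    have hk0 : (0:ℝ) < k := by exact_mod_cast hk
    obtain ⟨h1, h2⟩ := hα k hk
    have h3 : α k < (k:ℝ)/2 := lt_of_lt_of_le h2 (min_le_right _ _)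
    have hlam0 : 0 < lam k := by rw [hlam]; positivity
    have hmu0 : 0 < mu k := by
      rw [hmu]
      have : α k / k < 1/2 := by rw [div_lt_iff₀ hk0]; linarith
      linarith
    positivity
  have hPnonneg : ∀ n, 0 ≤ P n :=
    fun n => Finset.prod_nonneg (fun k hk => hfac k (Finset.mem_Icc.mp hk).1)
  -- ratio bound
  have hratio : ∀ k : ℕ, 1 ≤ k →
      mu k / lam k ≤ Real.exp (-(4 * α k / (k:ℝ)) + 8*C^2/(k:ℝ)^2) := by
    intro k hk
    have hk0 : (0:ℝ) < k := by exact_mod_cast hk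
    obtain ⟨h1, h2⟩ := hα k hk
    have h2C : α k < C := lt_of_lt_of_le h2 (min_le_left _ _)
    have h3 : α k < (k:ℝ)/2 := lt_of_lt_of_le h2 (min_le_right _ _)
    set x : ℝ := 2 * α k / k with hxdef
    have hx0 : 0 ≤ x := by positivity
    have hx1 : x < 1 := by rw [hxdef, div_lt_one hk0]; linarith
    have heq : mu k / lam k = (1 - x)/(1 + x) := by
      rw [hmu, hlam, hxdef]
      have hd1 : (1:ℝ)/2 + α k / k ≠ 0 := by positivity
      have hd2 : (1:ℝ) + 2 * α k / k ≠ 0 := by positivity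
      rw [div_eq_div_iff hd1 hd2]
      field_simp
    rw [heq]
    refine (ratio_le_exp hx0 hx1).trans (Real.exp_le_exp.mpr ?_)
    have e1 : -(2*x) = -(4 * α k / k) := by rw [hxdef]; ring
    have e2 : 2*x^2 = 8 * (α k)^2 / (k:ℝ)^2 := by rw [hxdef]; field_simp; ring
    rw [e1, e2]
    have hsq : (α k)^2 ≤ C^2 := by nlinarith
    have : 8 * (α k)^2 / (k:ℝ)^2 ≤ 8*C^2/(k:ℝ)^2 := by gcongr
    linarith
  -- choose a threshold N beyond which all iterated logs are ≥ 1
  have hgood_ev : ∀ᶠ x : ℝ in atTop, ∀ j ∈ Finset.range (K+2), 1 ≤ Real.log^[j] x :=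
    ((Finset.range (K+2)).eventually_all).mpr (fun j _ => (itlog_tendsto j).eventually_ge_atTop 1)
  obtain ⟨N₀, hN₀⟩ := eventually_atTop.mp hgood_ev
  set N : ℕ := max (n₀+1) (max 1 ⌈N₀⌉₊) with hNdef
  have hN1 : 1 ≤ N := le_trans (le_max_left 1 _) (le_max_right _ _)
  have hNn₀ : n₀ < N := lt_of_lt_of_le (Nat.lt_succ_self n₀) (le_max_left _ _)
  have hNceil : (⌈N₀⌉₊ : ℕ) ≤ N := le_trans (le_max_right 1 _) (le_max_right _ _)
  have hNgood : ∀ x : ℝ, (N:ℝ) ≤ x → Good (K+1) x := by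
    intro x hx j hj
    refine hN₀ x ?_ j (Finset.mem_range.mpr (by omega))
    calc N₀ ≤ (⌈N₀⌉₊ : ℝ) := Nat.le_ceil N₀
    _ ≤ (N : ℝ) := by exact_mod_cast hNceil
    _ ≤ x := hx
  have hgoodK : ∀ n : ℕ, N ≤ n → Good K ((n:ℝ)) := by
    intro n hn
    exact good_le (Nat.le_succ K) (hNgood _ (by exact_mod_cast hn))
  have hgoodK1 : ∀ n : ℕ, N ≤ n → Good K ((n:ℝ)+1) := by
    intro n hn
    refine good_le (Nat.le_succ K) (hNgood _ ?_)
    have : (N:ℝ) ≤ (n:ℝ) := by exact_mod_cast hn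
    linarith
  -- the almost-decreasing quantity
  set D : ℕ → ℝ := fun n => P n * Real.exp (GG K c ((n:ℝ)+1) + 8*C^2/(n:ℝ)) with hDdef
  have hDstep : ∀ n : ℕ, N ≤ n → D (n+1) ≤ D n := by
    intro n hn
    have hn1 : 1 ≤ n := le_trans hN1 hn
    have hn0 : (0:ℝ) < n := by exact_mod_cast hn1
    have hgood : Good K ((n:ℝ)+1) := hgoodK1 n hn
    have hcast : ((n+1 : ℕ):ℝ) = (n:ℝ)+1 := by push_cast; ring
    -- the hypothesis at n+1
    have hh : α (n+1) ≥ (1/4) * (1 + ∑ k ∈ Finset.Icc 1 (K-1), 1 / LP k (((n+1:ℕ)):ℝ)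
        + c / LP K (((n+1:ℕ)):ℝ)) := h (n+1) (by omega)
    have hm0 : (0:ℝ) < ((n+1:ℕ):ℝ) := by positivity
    have hff : ff K c ((n:ℝ)+1) ≤ 4 * α (n+1) / ((n:ℝ)+1) := by
      have hT : (1 + ∑ k ∈ Finset.Icc 1 (K-1), 1 / LP k (((n+1:ℕ)):ℝ)
          + c / LP K (((n+1:ℕ)):ℝ)) ≤ 4 * α (n+1) := by linarith
      have : ff K c (((n+1:ℕ)):ℝ) ≤ 4 * α (n+1) / (((n+1:ℕ)):ℝ) := by
        rw [ff, div_eq_mul_one_div (4*α (n+1)), mul_comm (4*α (n+1))]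
        exact mul_le_mul_of_nonneg_left hT (by positivity)
      rwa [hcast] at this
    have hc0 : (0:ℝ) ≤ c := by linarith
    have hGGs := GG_step K c hK hc0 hgood
    have hsplit : P (n+1) = P n * (mu (n+1) / lam (n+1)) :=
      Finset.prod_Icc_succ_top (by omega) _
    have hr := hratio (n+1) (by omega)
    rw [hcast] at hr
    have hfinal : D (n+1) ≤ P n * Real.exp (-(4*α (n+1)/((n:ℝ)+1)) + 8*C^2/((n:ℝ)+1)^2)
        * Real.exp (GG K c (((n:ℝ)+1)+1) + 8*C^2/((n:ℝ)+1)) := by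
      have hD1 : D (n+1) = P n * (mu (n+1) / lam (n+1))
          * Real.exp (GG K c (((n:ℝ)+1)+1) + 8*C^2/((n:ℝ)+1)) := by
        rw [hDdef]
        simp only []
        rw [hsplit, hcast]
      rw [hD1]
      exact mul_le_mul_of_nonneg_right
        (mul_le_mul_of_nonneg_left hr (hPnonneg n)) (le_of_lt (Real.exp_pos _))
    have hkey : 8*C^2/(((n:ℝ)+1)^2) + 8*C^2/((n:ℝ)+1) ≤ 8*C^2/(n:ℝ) := by
      have h1 : (1:ℝ)/(((n:ℝ)+1)^2) + 1/((n:ℝ)+1) ≤ 1/(n:ℝ) := by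
        rw [div_add_div _ _ (by positivity) (by positivity),
          div_le_div_iff₀ (by positivity) hn0]
        nlinarith [hn0]
      have h2 := mul_le_mul_of_nonneg_left h1 (show (0:ℝ) ≤ 8*C^2 by positivity)
      rw [mul_add, mul_one_div, mul_one_div, mul_one_div] at h2
      exact h2
    have hexp_le : Real.exp (-(4*α (n+1)/((n:ℝ)+1)) + 8*C^2/((n:ℝ)+1)^2)
        * Real.exp (GG K c (((n:ℝ)+1)+1) + 8*C^2/((n:ℝ)+1))
        ≤ Real.exp (GG K c ((n:ℝ)+1) + 8*C^2/(n:ℝ)) := by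
      rw [← Real.exp_add, Real.exp_le_exp]
      linarith
    calc D (n+1) ≤ _ := hfinal
    _ ≤ P n * Real.exp (GG K c ((n:ℝ)+1) + 8*C^2/(n:ℝ)) := by
        rw [mul_assoc]
        exact mul_le_mul_of_nonneg_left hexp_le (hPnonneg n)
    _ = D n := rfl
  -- D is decreasing from N on
  have hDge : ∀ m : ℕ, D (N+m) ≤ D N := by
    intro m
    induction m with
    | zero => simp
    | succ k ih =>
      have h1 := hDstep (N+k) (Nat.le_add_right N k)
      have e : N + (k+1) = (N+k)+1 := by omega
      rw [e]
      exact le_trans h1 ih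
  have hDle : ∀ n : ℕ, N ≤ n → D n ≤ D N := by
    intro n hn
    obtain ⟨m, rfl⟩ := Nat.exists_eq_add_of_le hn
    exact hDge m
  have hB0 : 0 ≤ D N := mul_nonneg (hPnonneg N) (le_of_lt (Real.exp_pos _))
  have hPle : ∀ n : ℕ, N ≤ n → P n ≤ D N * qq K c ((n:ℝ)+1) := by
    intro n hn
    have hgood := hgoodK1 n hn
    have hqq : Real.exp (-(GG K c ((n:ℝ)+1))) = qq K c ((n:ℝ)+1) := exp_neg_GG K c hK hgood
    have hn1 : 1 ≤ n := le_trans hN1 hn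
    have hn0 : (0:ℝ) < n := by exact_mod_cast hn1
    have h3 : Real.exp (-(GG K c ((n:ℝ)+1) + 8*C^2/(n:ℝ)))
        ≤ Real.exp (-(GG K c ((n:ℝ)+1))) := by
      rw [Real.exp_le_exp]
      have : (0:ℝ) ≤ 8*C^2/(n:ℝ) := by positivity
      linarith
    have hE : (0:ℝ) < Real.exp (GG K c ((n:ℝ)+1) + 8*C^2/(n:ℝ)) := Real.exp_pos _
    have h1 : P n ≤ D N * Real.exp (-(GG K c ((n:ℝ)+1) + 8*C^2/(n:ℝ))) := by
      rw [Real.exp_neg, ← div_eq_mul_inv, le_div_iff₀ hE]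
      exact hDle n hn
    refine h1.trans ?_
    rw [← hqq]
    exact mul_le_mul_of_nonneg_left h3 hB0
  set v : ℕ → ℝ := fun n => (Real.log^[K] ((n:ℝ))) ^ (1-c) with hvdef
  have hqv : ∀ n : ℕ, N ≤ n → qq K c ((n:ℝ)+1) ≤ (1/(c-1)) * (v n - v (n+1)) := by
    intro n hn
    have hgood := hgoodK n hn
    have hs := H_step K c hK hc hgood
    have hcast : ((n+1 : ℕ):ℝ) = (n:ℝ)+1 := by push_cast; ring
    have hc1 : (0:ℝ) < c - 1 := by linarith
    have hv1 : v (n+1) = (Real.log^[K] ((n:ℝ)+1)) ^ (1-c) := by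
      rw [hvdef]; simp only []; rw [hcast]
    have hv0 : v n = (Real.log^[K] ((n:ℝ))) ^ (1-c) := rfl
    rw [hv1, hv0, mul_comm (1/(c-1)), ← div_eq_mul_one_div, le_div_iff₀ hc1]
    nlinarith [hs]
  have hqpos : ∀ n : ℕ, N ≤ n → 0 < qq K c ((n:ℝ)+1) :=
    fun n hn => qq_pos K c (hgoodK1 n hn)
  have hvdiff : ∀ n : ℕ, N ≤ n → 0 ≤ v n - v (n+1) := by
    intro n hn
    have hc1 : (0:ℝ) < 1/(c-1) := by
      have : (0:ℝ) < c - 1 := by linarith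
      positivity
    by_contra hlt
    push_neg at hlt
    have h4 := mul_neg_of_pos_of_neg hc1 hlt
    linarith [hqv n hn, hqpos n hn]
  have hv_nonneg : ∀ n : ℕ, N ≤ n → 0 ≤ v n := fun n hn =>
    Real.rpow_nonneg (le_trans zero_le_one (hgoodK n hn K le_rfl)) _
  have hsum1 : Summable (fun m : ℕ => v (N+m) - v (N+(m+1))) := by
    apply summable_of_sum_range_le (c := v N)
    · intro m
      have e : N + (m+1) = (N+m)+1 := by omega
      rw [e]
      exact hvdiff (N+m) (Nat.le_add_right _ _)
    · intro M
      rw [Finset.sum_range_sub' (fun i => v (N+i)) M]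
      simp only [Nat.add_zero]
      have := hv_nonneg (N+M) (Nat.le_add_right _ _)
      linarith
  have hsum2 : Summable (fun m : ℕ => (D N * (1/(c-1))) * (v (N+m) - v (N+(m+1)))) :=
    hsum1.mul_left _
  have hsum3 : Summable (fun m : ℕ => P (m+N)) := by
    refine Summable.of_nonneg_of_le (fun m => hPnonneg _) (fun m => ?_) hsum2
    have hm : N ≤ m + N := Nat.le_add_left _ _
    calc P (m+N) ≤ D N * qq K c ((↑(m+N):ℝ)+1) := hPle (m+N) hm
    _ ≤ D N * ((1/(c-1)) * (v (m+N) - v ((m+N)+1))) :=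
        mul_le_mul_of_nonneg_left (hqv (m+N) hm) hB0
    _ = (D N * (1/(c-1))) * (v (N+m) - v (N+(m+1))) := by
        rw [show N+m = m+N from by omega, show N+(m+1) = (m+N)+1 from by omega]
        ring
  exact (summable_nat_add_iff N).mp hsum3
end

section
/- (Series form of the recurrence criterion for the perturbed reflected random walk.) Let (α_n) be a sequence of real numbers with 0 < α_n < min{C, n/2} for all n ≥ 1, for some constant C > 0, and set λ_n = 1/2 + α_n/n and μ_n = 1/2 − α_n/n. Suppose there exist an integer K ≥ 1 and an index n_0 such that for all n > n_0, α_n ≤ (1/4)·(1 + ∑_{k=1}^{K} 1/(∏_{j=1}^{k} ln_{(j)} n)). Then the series ∑_{n=1}^∞ ∏_{k=1}^{n} (μ_k/λ_k) diverges, i.e. equals ∞ (equivalently, the associated reflected random walk with upward step probability 1/2 + α_{S_t}/S_t at state S_t > 0 is recurrent). -/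
open Real Filter Finset

namespace RWaux

/-- iterated exponential thresholds -/
noncomputable def E : ℕ → ℝ := fun j => Real.exp^[j] 1

lemma E_zero : E 0 = 1 := rfl

lemma E_succ (j : ℕ) : E (j + 1) = Real.exp (E j) :=
  Function.iterate_succ_apply' _ _ _

lemma one_le_E (j : ℕ) : 1 ≤ E j := by
  induction j with
  | zero => simp [E_zero]
  | succ j ih =>
    rw [E_succ]
    have := Real.add_one_le_exp (E j)
    linarith

lemma E_mono : Monotone E := by
  apply monotone_nat_of_le_succ
  intro j
  rw [E_succ]
  have := Real.add_one_le_exp (E j)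
  linarith

lemma iter_ge (i j : ℕ) (x : ℝ) (hx : E (i + j) ≤ x) : E j ≤ Real.log^[i] x := by
  induction i generalizing j with
  | zero => simpa using hx
  | succ i ih =>
    have h1 : E (j + 1) ≤ Real.log^[i] x := ih (j + 1) (by rw [show i + (j+1) = i + 1 + j by ring] ; exact hx)
    rw [Function.iterate_succ_apply']
    rw [E_succ] at h1
    calc E j = Real.log (Real.exp (E j)) := (Real.log_exp _).symm
    _ ≤ Real.log (Real.log^[i] x) := Real.log_le_log (Real.exp_pos _) h1

lemma iter_pos (i j : ℕ) (x : ℝ) (hij : i ≤ j) (hx : E j ≤ x) : 1 ≤ Real.log^[i] x := by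
  have := iter_ge i (j - i) x (by rwa [Nat.add_sub_cancel' hij])
  exact le_trans (one_le_E _) this

lemma iter_mono (i j : ℕ) (x y : ℝ) (hij : i ≤ j) (hx : E j ≤ x) (hxy : x ≤ y) :
    Real.log^[i] x ≤ Real.log^[i] y := by
  induction i with
  | zero => simpa using hxy
  | succ i ih =>
    have hij' : i ≤ j := Nat.le_of_succ_le hij
    rw [Function.iterate_succ_apply', Function.iterate_succ_apply']
    exact Real.log_le_log (lt_of_lt_of_le one_pos (iter_pos i j x hij' hx)) (ih hij')

/-- `Q j x = x * log x * ... * log^[j] x` -/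
noncomputable def Q (j : ℕ) (x : ℝ) : ℝ := ∏ i ∈ Finset.range (j + 1), Real.log^[i] x

lemma one_le_Q (j : ℕ) (x : ℝ) (hx : E j ≤ x) : 1 ≤ Q j x := by
  have := Finset.prod_le_prod (s := Finset.range (j+1)) (f := fun _ => (1:ℝ))
    (g := fun i => Real.log^[i] x) (by intros; norm_num)
    (fun i hi => iter_pos i j x (Nat.lt_succ_iff.mp (Finset.mem_range.mp hi)) hx)
  simpa [Q] using this

lemma Q_pos (j : ℕ) (x : ℝ) (hx : E j ≤ x) : 0 < Q j x :=
  lt_of_lt_of_le one_pos (one_le_Q j x hx)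

lemma Q_mono (j : ℕ) (x y : ℝ) (hx : E j ≤ x) (hxy : x ≤ y) : Q j x ≤ Q j y := by
  refine Finset.prod_le_prod ?_ ?_
  · intro i hi
    exact le_trans zero_le_one (iter_pos i j x (Nat.lt_succ_iff.mp (Finset.mem_range.mp hi)) hx)
  · intro i hi
    exact iter_mono i j x y (Nat.lt_succ_iff.mp (Finset.mem_range.mp hi)) hx hxy

lemma hasDeriv (j : ℕ) (x : ℝ) (hx : E j ≤ x) :
    HasDerivAt (Real.log^[j + 1]) (Q j x)⁻¹ x := by
  induction j with
  | zero =>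
    have hx0 : x ≠ 0 := by nlinarith [le_trans (one_le_E 0) hx]
    have := Real.hasDerivAt_log hx0
    simpa [Q] using this
  | succ j ih =>
    have hx' : E j ≤ x := le_trans (E_mono (Nat.le_succ j)) hx
    have h1 := ih hx'
    have hy : 1 ≤ Real.log^[j + 1] x :=
      iter_pos (j + 1) (j + 1) x le_rfl hx
    have h2 : HasDerivAt Real.log (Real.log^[j + 1] x)⁻¹ (Real.log^[j + 1] x) :=
      Real.hasDerivAt_log (by linarith)
    have h3 := h2.comp x h1
    have heq : Real.log ∘ Real.log^[j + 1] = Real.log^[j + 1 + 1] :=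
      (Function.iterate_succ' Real.log (j + 1)).symm
    rw [heq] at h3
    have : (Real.log^[j+1] x)⁻¹ * (Q j x)⁻¹ = (Q (j+1) x)⁻¹ := by
      simp only [Q, Finset.prod_range_succ, mul_inv]
      ring
    rwa [this] at h3

lemma slope_bounds (j : ℕ) (a b : ℝ) (ha : E j ≤ a) (hab : a < b) :
    (Q j b)⁻¹ * (b - a) ≤ Real.log^[j+1] b - Real.log^[j+1] a ∧
    Real.log^[j+1] b - Real.log^[j+1] a ≤ (Q j a)⁻¹ * (b - a) := by
  obtain ⟨c, hc, hceq⟩ := exists_hasDerivAt_eq_slope (Real.log^[j+1]) (fun x => (Q j x)⁻¹) hab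
    (fun x hx => (hasDeriv j x (le_trans ha hx.1)).continuousAt.continuousWithinAt)
    (fun x hx => hasDeriv j x (le_trans ha hx.1.le))
  have hca : E j ≤ c := le_trans ha hc.1.le
  have hQa : 0 < Q j a := Q_pos j a ha
  have hQc : 0 < Q j c := Q_pos j c hca
  have hQb : 0 < Q j b := Q_pos j b (le_trans ha (by linarith [hab]))
  have h1 : Q j a ≤ Q j c := Q_mono j a c ha hc.1.le
  have h2 : Q j c ≤ Q j b := Q_mono j c b hca hc.2.le
  have hdiff : Real.log^[j+1] b - Real.log^[j+1] a = (Q j c)⁻¹ * (b - a) := by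
    rw [hceq, div_mul_cancel₀ _ (by linarith : b - a ≠ 0)]
  constructor
  · rw [hdiff]
    have : (Q j b)⁻¹ ≤ (Q j c)⁻¹ := by
      apply inv_anti₀ hQc h2
    nlinarith
  · rw [hdiff]
    have : (Q j c)⁻¹ ≤ (Q j a)⁻¹ := by
      apply inv_anti₀ hQa h1
    nlinarith

lemma telescope (F : ℕ → ℝ) (m n : ℕ) (hm : 1 ≤ m) (hmn : m ≤ n) :
    ∑ k ∈ Finset.Icc m n, (F k - F (k - 1)) = F n - F (m - 1) := by
  clear hm
  induction n, hmn using Nat.le_induction with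
  | base => rw [Finset.Icc_self, Finset.sum_singleton]
  | succ n hn ih =>
    rw [← Finset.insert_Icc_right_eq_Icc_add_one (by omega)]
    rw [Finset.sum_insert (by simp)]
    rw [ih]
    simp only [Nat.add_sub_cancel]
    ring

lemma iterlog_tendsto (j : ℕ) : Tendsto (Real.log^[j]) atTop atTop := by
  induction j with
  | zero => simpa using tendsto_id
  | succ j ih =>
    rw [Function.iterate_succ']
    exact Real.tendsto_log_atTop.comp ih

lemma logratio (x : ℝ) (hx : 0 < x) (hx2 : x ≤ 1/2) :
    -(2*x) - 2*x^2 ≤ Real.log ((1-x)/(1+x)) := by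
  have h1x : (0:ℝ) < 1 - x := by linarith
  have h1x' : (0:ℝ) < 1 + x := by linarith
  have h1 : Real.log (1+x) ≤ x := by
    have := Real.log_le_sub_one_of_pos h1x'
    linarith
  have h2 : Real.log ((1-x)⁻¹) ≤ (1-x)⁻¹ - 1 :=
    Real.log_le_sub_one_of_pos (by positivity)
  have h3 : (1-x)⁻¹ - 1 ≤ x + 2*x^2 := by
    rw [inv_eq_one_div, div_sub' (ne_of_gt h1x), div_le_iff₀ h1x]
    nlinarith
  have h4 : -(x + 2*x^2) ≤ Real.log (1-x) := by
    rw [Real.log_inv] at h2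
    linarith
  rw [Real.log_div (ne_of_gt h1x) (ne_of_gt h1x')]
  linarith

lemma Q_eq (j : ℕ) (x : ℝ) :
    Q j x = x * ∏ i ∈ Finset.Icc 1 j, Real.log^[i] x := by
  rw [Q, Finset.prod_range_succ']
  rw [mul_comm]
  congr 1
  rw [← Finset.Ico_add_one_right_eq_Icc, Finset.prod_Ico_eq_prod_range]
  apply Finset.prod_congr (by simp) (fun i _ => by rw [add_comm])

end RWaux

/-- **Series form of the recurrence criterion for the perturbed reflected random
walk**, with `λ_n = 1/2 + α_n/n` and `μ_n = 1/2 - α_n/n`. The series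
`∑_{n=1}^∞ ∏_{k=1}^n μ_k/λ_k` diverges to `∞`, stated as: the partial sums tend
to infinity. Here `Real.log^[k]` is the `k`-th iterate of `Real.log`. -/
theorem random_walk_recurrent
    (α : ℕ → ℝ) (C : ℝ) (hC : 0 < C)
    (hα : ∀ n : ℕ, 1 ≤ n → 0 < α n ∧ α n < min C ((n : ℝ) / 2))
    (lam mu : ℕ → ℝ)
    (hlam : ∀ n : ℕ, lam n = 1 / 2 + α n / (n : ℝ))
    (hmu : ∀ n : ℕ, mu n = 1 / 2 - α n / (n : ℝ))
    (K : ℕ) (hK : 1 ≤ K) (n₀ : ℕ)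
    (h : ∀ n > n₀,
      α n ≤ (1 / 4) *
        (1 + ∑ k ∈ Finset.Icc 1 K,
              1 / ∏ j ∈ Finset.Icc 1 k, Real.log^[j] (n : ℝ))) :
    Filter.Tendsto
      (fun N : ℕ => ∑ n ∈ Finset.Icc 1 N, ∏ k ∈ Finset.Icc 1 n, mu k / lam k)
      Filter.atTop Filter.atTop := by
  classical
  obtain ⟨m₁, hm₁⟩ := exists_nat_ge (max (RWaux.E (K+1) + 1) (4*C))
  set m : ℕ := max m₁ (max (n₀+1) 2) with hm_def
  have hm₁m : (m₁:ℝ) ≤ (m:ℝ) := Nat.cast_le.mpr (le_max_left _ _)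
  have hmE : RWaux.E (K+1) + 1 ≤ (m:ℝ) :=
    le_trans (le_trans (le_max_left _ _) hm₁) hm₁m
  have hm4C : 4*C ≤ (m:ℝ) := le_trans (le_trans (le_max_right _ _) hm₁) hm₁m
  have hmn₀ : n₀ < m :=
    lt_of_lt_of_le (Nat.lt_succ_self n₀) (le_trans (le_max_left _ _) (le_max_right _ _))
  have hm2 : 2 ≤ m := le_trans (le_max_right _ _) (le_max_right _ _)
  have hm1 : 1 ≤ m := by omega
  have hm1R : (1:ℝ) ≤ (m:ℝ) := by exact_mod_cast hm1
  have hmpred : ((m - 1 : ℕ) : ℝ) = (m:ℝ) - 1 := Nat.cast_pred (by omega)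
  have hE1 : (1:ℝ) ≤ RWaux.E (K+1) := RWaux.one_le_E _
  -- positivity of ratios
  have hpos : ∀ k : ℕ, 1 ≤ k → 0 < mu k / lam k := by
    intro k hk
    have hk0 : (0:ℝ) < k := by exact_mod_cast hk
    obtain ⟨ha1, ha2⟩ := hα k hk
    have h2 : α k < (k:ℝ)/2 := lt_of_lt_of_le ha2 (min_le_right _ _)
    have hak : α k / k < 1/2 := by rw [div_lt_iff₀ hk0]; linarith
    have hak0 : 0 < α k / k := div_pos ha1 hk0
    have hlam' : 0 < lam k := by rw [hlam]; linarith
    have hmu' : 0 < mu k := by rw [hmu]; linarith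
    exact div_pos hmu' hlam'
  -- products are positive
  have hprodpos : ∀ n : ℕ, 0 < ∏ k ∈ Finset.Icc 1 n, mu k / lam k := by
    intro n
    exact Finset.prod_pos fun k hk => hpos k (Finset.mem_Icc.mp hk).1
  -- per-term log bound
  have hlogbound : ∀ k : ℕ, m ≤ k →
      -(4 * α k / (k:ℝ)) - 8*C^2/(k:ℝ)^2 ≤ Real.log (mu k / lam k) := by
    intro k hk
    have hk1 : 1 ≤ k := le_trans hm1 hk
    have hk0 : (0:ℝ) < k := by exact_mod_cast hk1
    have hkm : (m:ℝ) ≤ (k:ℝ) := Nat.cast_le.mpr hk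
    obtain ⟨ha1, ha2⟩ := hα k hk1
    have haC : α k < C := lt_of_lt_of_le ha2 (min_le_left _ _)
    set x := 2 * α k / (k:ℝ) with hxdef
    have hx0 : 0 < x := by positivity
    have hx2 : x ≤ 1/2 := by
      rw [hxdef, div_le_iff₀ hk0]
      nlinarith
    have hk0' : (k:ℝ) ≠ 0 := ne_of_gt hk0
    have hak : α k / k < 1/2 := by
      rw [div_lt_iff₀ hk0]
      have := lt_of_lt_of_le ha2 (min_le_right _ _); linarith
    have hak0 : 0 < α k / k := div_pos ha1 hk0
    have hratio : mu k / lam k = (1 - x)/(1 + x) := by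
      rw [hmu k, hlam k, hxdef]
      rw [div_eq_div_iff (by linarith) (by
        have : 0 < 2 * α k / k := by positivity
        linarith)]
      field_simp
    rw [hratio]
    have hmain := RWaux.logratio x hx0 hx2
    have h2x : 2*x = 4 * α k / (k:ℝ) := by rw [hxdef]; ring
    have hxle : x ≤ 2*C/(k:ℝ) := by
      rw [hxdef]
      gcongr
      all_goals linarith
    have hsq : x^2 ≤ (2*C/(k:ℝ))^2 := pow_le_pow_left₀ hx0.le hxle 2
    have hsq2 : 2*x^2 ≤ 8*C^2/(k:ℝ)^2 := by
      rw [show (8:ℝ)*C^2/(k:ℝ)^2 = 2*((2*C/(k:ℝ))^2) by rw [div_pow]; ring]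
      linarith
    linarith
  -- bound the alpha sum by the iterated log sum
  have halpha : ∀ n : ℕ, m ≤ n →
      ∑ k ∈ Finset.Icc m n, 4 * α k / (k:ℝ)
        ≤ ∑ j ∈ Finset.range (K+1), Real.log^[j+1] (n:ℝ) := by
    intro n hn
    have step1 : ∀ k ∈ Finset.Icc m n,
        4 * α k / (k:ℝ) ≤ ∑ j ∈ Finset.range (K+1), (RWaux.Q j (k:ℝ))⁻¹ := by
      intro k hk
      obtain ⟨hk1, hk2⟩ := Finset.mem_Icc.mp hk
      have hk1' : 1 ≤ k := le_trans hm1 hk1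
      have hk0 : (0:ℝ) < k := by exact_mod_cast hk1'
      have hkE : RWaux.E (K+1) ≤ (k:ℝ) := by
        have : (m:ℝ) ≤ (k:ℝ) := Nat.cast_le.mpr hk1
        linarith
      have hh := h k (lt_of_lt_of_le hmn₀ hk1)
      have hsplit : ∑ j ∈ Finset.range (K+1), (RWaux.Q j (k:ℝ))⁻¹
          = (RWaux.Q 0 (k:ℝ))⁻¹ + ∑ j ∈ Finset.Icc 1 K, (RWaux.Q j (k:ℝ))⁻¹ := by
        rw [Finset.sum_range_succ', add_comm]
        congr 1
        rw [← Finset.Ico_add_one_right_eq_Icc, Finset.sum_Ico_eq_sum_range]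
        exact Finset.sum_congr rfl (fun i _ => by rw [add_comm])
      have hQ0 : RWaux.Q 0 (k:ℝ) = (k:ℝ) := by simp [RWaux.Q]
      have hgpos : ∀ j ∈ Finset.Icc 1 K,
          0 < ∏ i ∈ Finset.Icc 1 j, Real.log^[i] (k:ℝ) := by
        intro j hj
        apply Finset.prod_pos
        intro i hi
        have hij : i ≤ j := (Finset.mem_Icc.mp hi).2
        have hjK : j ≤ K := (Finset.mem_Icc.mp hj).2
        exact lt_of_lt_of_le one_pos
          (RWaux.iter_pos i (K+1) (k:ℝ) (by omega) hkE)
      calc 4 * α k / (k:ℝ)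
          ≤ (1 + ∑ j ∈ Finset.Icc 1 K,
              1 / ∏ i ∈ Finset.Icc 1 j, Real.log^[i] (k:ℝ)) / (k:ℝ) := by
            gcongr
            linarith
        _ = (RWaux.Q 0 (k:ℝ))⁻¹ + ∑ j ∈ Finset.Icc 1 K, (RWaux.Q j (k:ℝ))⁻¹ := by
            rw [hQ0, add_div, Finset.sum_div]
            congr 1
            · rw [one_div]
            · refine Finset.sum_congr rfl (fun j hj => ?_)
              rw [RWaux.Q_eq, mul_inv, one_div, div_eq_mul_inv, mul_comm]
        _ = ∑ j ∈ Finset.range (K+1), (RWaux.Q j (k:ℝ))⁻¹ := hsplit.symm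
    have step2 : ∀ k ∈ Finset.Icc m n, ∀ j ∈ Finset.range (K+1),
        (RWaux.Q j (k:ℝ))⁻¹
          ≤ Real.log^[j+1] ((k:ℕ):ℝ) - Real.log^[j+1] ((k-1:ℕ):ℝ) := by
      intro k hk j hj
      obtain ⟨hk1, _⟩ := Finset.mem_Icc.mp hk
      have hjK : j ≤ K := Nat.lt_succ_iff.mp (Finset.mem_range.mp hj)
      have hk1' : 1 ≤ k := le_trans hm1 hk1
      have hkpred : ((k - 1 : ℕ) : ℝ) = (k:ℝ) - 1 := Nat.cast_pred (by omega)
      have hkm : (m:ℝ) ≤ (k:ℝ) := Nat.cast_le.mpr hk1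
      have haE : RWaux.E j ≤ ((k-1:ℕ):ℝ) := by
        rw [hkpred]
        have := RWaux.E_mono (show j ≤ K+1 by omega)
        linarith
      have hab : ((k-1:ℕ):ℝ) < (k:ℝ) := by rw [hkpred]; linarith
      have := (RWaux.slope_bounds j ((k-1:ℕ):ℝ) (k:ℝ) haE hab).1
      have hone : (k:ℝ) - ((k-1:ℕ):ℝ) = 1 := by rw [hkpred]; ring
      rw [hone, mul_one] at this
      exact this
    have hFnonneg : ∀ j ∈ Finset.range (K+1),
        0 ≤ Real.log^[j+1] ((m-1:ℕ):ℝ) := by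
      intro j hj
      have hjK : j ≤ K := Nat.lt_succ_iff.mp (Finset.mem_range.mp hj)
      have : RWaux.E (K+1) ≤ ((m-1:ℕ):ℝ) := by rw [hmpred]; linarith
      have := RWaux.iter_pos (j+1) (K+1) ((m-1:ℕ):ℝ) (by omega) this
      linarith
    calc ∑ k ∈ Finset.Icc m n, 4 * α k / (k:ℝ)
        ≤ ∑ k ∈ Finset.Icc m n, ∑ j ∈ Finset.range (K+1), (RWaux.Q j (k:ℝ))⁻¹ :=
          Finset.sum_le_sum step1
      _ ≤ ∑ k ∈ Finset.Icc m n, ∑ j ∈ Finset.range (K+1),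
            (Real.log^[j+1] ((k:ℕ):ℝ) - Real.log^[j+1] ((k-1:ℕ):ℝ)) :=
          Finset.sum_le_sum (fun k hk => Finset.sum_le_sum (step2 k hk))
      _ = ∑ j ∈ Finset.range (K+1), ∑ k ∈ Finset.Icc m n,
            (Real.log^[j+1] ((k:ℕ):ℝ) - Real.log^[j+1] ((k-1:ℕ):ℝ)) :=
          Finset.sum_comm
      _ = ∑ j ∈ Finset.range (K+1),
            (Real.log^[j+1] ((n:ℕ):ℝ) - Real.log^[j+1] ((m-1:ℕ):ℝ)) :=
          Finset.sum_congr rfl (fun j _ =>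
            RWaux.telescope (fun k => Real.log^[j+1] ((k:ℕ):ℝ)) m n hm1 hn)
      _ ≤ ∑ j ∈ Finset.range (K+1), Real.log^[j+1] (n:ℝ) :=
          Finset.sum_le_sum (fun j hj => by
            have := hFnonneg j hj
            linarith)
  -- bound the 1/k² error sum
  have hinvsq : ∀ n : ℕ, m ≤ n →
      ∑ k ∈ Finset.Icc m n, 8*C^2/(k:ℝ)^2 ≤ 8*C^2 := by
    intro n hn
    have step : ∀ k ∈ Finset.Icc m n,
        8*C^2/(k:ℝ)^2 ≤ (-(8*C^2/(k:ℝ))) - (-(8*C^2/((k-1:ℕ):ℝ))) := by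
      intro k hk
      obtain ⟨hk1, _⟩ := Finset.mem_Icc.mp hk
      have hk2 : 2 ≤ k := le_trans hm2 hk1
      have hkR : (2:ℝ) ≤ (k:ℝ) := by exact_mod_cast hk2
      have hkpred : ((k - 1 : ℕ) : ℝ) = (k:ℝ) - 1 := Nat.cast_pred (by omega)
      rw [hkpred]
      have h1 : (0:ℝ) < (k:ℝ) - 1 := by linarith
      have h0 : (0:ℝ) < (k:ℝ) := by linarith
      have key : (-(8*C^2/(k:ℝ))) - (-(8*C^2/((k:ℝ)-1)))
          = 8*C^2/(((k:ℝ)-1)*(k:ℝ)) := by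
        field_simp
        ring
      rw [key]
      gcongr
      all_goals nlinarith
    calc ∑ k ∈ Finset.Icc m n, 8*C^2/(k:ℝ)^2
        ≤ ∑ k ∈ Finset.Icc m n,
            ((-(8*C^2/(k:ℝ))) - (-(8*C^2/((k-1:ℕ):ℝ)))) := Finset.sum_le_sum step
      _ = (-(8*C^2/(n:ℝ))) - (-(8*C^2/((m-1:ℕ):ℝ))) :=
          RWaux.telescope (fun k => -(8*C^2/((k:ℕ):ℝ))) m n hm1 hn
      _ ≤ 8*C^2 := by
          rw [hmpred]
          have hn0 : (0:ℝ) < (n:ℝ) := by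
            have : (1:ℕ) ≤ n := le_trans hm1 hn
            exact_mod_cast Nat.lt_of_lt_of_le Nat.zero_lt_one this
          have hm1' : (1:ℝ) ≤ (m:ℝ) - 1 := by linarith
          have e1 : 8*C^2/((m:ℝ)-1) ≤ 8*C^2 := by
            rw [div_le_iff₀ (by linarith)]
            nlinarith
          have e2 : 0 < 8*C^2/(n:ℝ) := by positivity
          linarith
  -- product lower bound
  set c₀ : ℝ := ∏ k ∈ Finset.Icc 1 (m-1), mu k / lam k with hc₀
  have hc₀pos : 0 < c₀ := hprodpos (m-1)
  have hprodlow : ∀ n : ℕ, m ≤ n →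
      c₀ * (Real.exp (-(8*C^2)) * (RWaux.Q K (n:ℝ))⁻¹)
        ≤ ∏ k ∈ Finset.Icc 1 n, mu k / lam k := by
    intro n hn
    have hnE : RWaux.E (K+1) ≤ (n:ℝ) := by
      have : (m:ℝ) ≤ (n:ℝ) := Nat.cast_le.mpr hn
      linarith
    have hsplitprod : (∏ k ∈ Finset.Icc 1 n, mu k / lam k)
        = c₀ * ∏ k ∈ Finset.Icc m n, mu k / lam k := by
      rw [hc₀]
      rw [show Finset.Icc 1 n = Finset.Ioc 0 n from Finset.Icc_add_one_left_eq_Ioc 0 n,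
          show Finset.Icc 1 (m-1) = Finset.Ioc 0 (m-1) from Finset.Icc_add_one_left_eq_Ioc 0 (m-1),
          show Finset.Icc m n = Finset.Ioc (m-1) n by
            rw [← Finset.Icc_add_one_left_eq_Ioc]; congr 1; omega]
      exact (Finset.prod_Ioc_consecutive _ (Nat.zero_le (m-1)) (by omega)).symm
    rw [hsplitprod]
    have hexp : ∏ k ∈ Finset.Icc m n, mu k / lam k
        = Real.exp (∑ k ∈ Finset.Icc m n, Real.log (mu k / lam k)) := by
      rw [Real.exp_sum]
      exact Finset.prod_congr rfl (fun k hk =>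
        (Real.exp_log (hpos k (le_trans hm1 (Finset.mem_Icc.mp hk).1))).symm)
    have hsumlog : -(∑ j ∈ Finset.range (K+1), Real.log^[j+1] (n:ℝ)) - 8*C^2
        ≤ ∑ k ∈ Finset.Icc m n, Real.log (mu k / lam k) := by
      have e1 : ∑ k ∈ Finset.Icc m n,
          (-(4 * α k / (k:ℝ)) - 8*C^2/(k:ℝ)^2)
            ≤ ∑ k ∈ Finset.Icc m n, Real.log (mu k / lam k) :=
        Finset.sum_le_sum (fun k hk => hlogbound k (Finset.mem_Icc.mp hk).1)
      rw [Finset.sum_sub_distrib, Finset.sum_neg_distrib] at e1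
      have := halpha n hn
      have := hinvsq n hn
      linarith
    have hexpL : Real.exp (∑ j ∈ Finset.range (K+1), Real.log^[j+1] (n:ℝ))
        = RWaux.Q K (n:ℝ) := by
      rw [Real.exp_sum, RWaux.Q]
      refine Finset.prod_congr rfl (fun j hj => ?_)
      rw [Function.iterate_succ_apply', Real.exp_log]
      exact lt_of_lt_of_le one_pos
        (RWaux.iter_pos j (K+1) (n:ℝ)
          (Nat.le_succ_of_le (Nat.lt_succ_iff.mp (Finset.mem_range.mp hj))) hnE)
    rw [hexp]
    have hmono := Real.exp_le_exp.mpr hsumlog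
    rw [sub_eq_add_neg, Real.exp_add, Real.exp_neg, Real.exp_neg, hexpL] at hmono
    calc c₀ * (Real.exp (-(8*C^2)) * (RWaux.Q K (n:ℝ))⁻¹)
        ≤ c₀ * Real.exp (∑ k ∈ Finset.Icc m n, Real.log (mu k / lam k)) := by
          apply mul_le_mul_of_nonneg_left _ hc₀pos.le
          rw [Real.exp_neg]
          calc (Real.exp (8*C^2))⁻¹ * (RWaux.Q K (n:ℝ))⁻¹
              = (RWaux.Q K (n:ℝ))⁻¹ * (Real.exp (8*C^2))⁻¹ := by ring
            _ ≤ _ := hmono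
      _ = _ := rfl
  -- final estimate and limit
  set c₁ : ℝ := c₀ * Real.exp (-(8*C^2)) with hc₁
  have hc₁pos : 0 < c₁ := by positivity
  have hfinal : ∀ N : ℕ, m ≤ N →
      c₁ * (Real.log^[K+1] ((N:ℝ)+1) - Real.log^[K+1] ((m:ℝ)))
        ≤ ∑ n ∈ Finset.Icc 1 N, ∏ k ∈ Finset.Icc 1 n, mu k / lam k := by
    intro N hN
    have hsub : ∑ n ∈ Finset.Icc m N, ∏ k ∈ Finset.Icc 1 n, mu k / lam k
        ≤ ∑ n ∈ Finset.Icc 1 N, ∏ k ∈ Finset.Icc 1 n, mu k / lam k :=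
      Finset.sum_le_sum_of_subset_of_nonneg
        (Finset.Icc_subset_Icc (by omega) le_rfl)
        (fun n _ _ => (hprodpos n).le)
    have step : ∀ n ∈ Finset.Icc m N,
        c₁ * (Real.log^[K+1] (((n+1:ℕ)):ℝ) - Real.log^[K+1] ((n:ℕ):ℝ))
          ≤ ∏ k ∈ Finset.Icc 1 n, mu k / lam k := by
      intro n hn
      obtain ⟨hn1, _⟩ := Finset.mem_Icc.mp hn
      have hnE : RWaux.E K ≤ (n:ℝ) := by
        have h1 : (m:ℝ) ≤ (n:ℝ) := Nat.cast_le.mpr hn1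
        have := RWaux.E_mono (Nat.le_succ K)
        linarith
      have hab : (n:ℝ) < ((n+1:ℕ):ℝ) := by push_cast; linarith
      have hs := (RWaux.slope_bounds K (n:ℝ) ((n+1:ℕ):ℝ) hnE hab).2
      have hone : ((n+1:ℕ):ℝ) - (n:ℝ) = 1 := by push_cast; ring
      rw [hone, mul_one] at hs
      calc c₁ * (Real.log^[K+1] (((n+1:ℕ)):ℝ) - Real.log^[K+1] ((n:ℕ):ℝ))
          ≤ c₁ * (RWaux.Q K ((n:ℕ):ℝ))⁻¹ :=
            mul_le_mul_of_nonneg_left hs hc₁pos.le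
        _ = c₀ * (Real.exp (-(8*C^2)) * (RWaux.Q K (n:ℝ))⁻¹) := by
            rw [hc₁]; ring
        _ ≤ _ := hprodlow n hn1
    have htel : ∑ n ∈ Finset.Icc m N,
        (Real.log^[K+1] (((n+1:ℕ)):ℝ) - Real.log^[K+1] ((n:ℕ):ℝ))
          = Real.log^[K+1] (((N+1:ℕ)):ℝ) - Real.log^[K+1] ((m:ℕ):ℝ) := by
      have e := RWaux.telescope (fun k => Real.log^[K+1] (((k+1:ℕ)):ℝ)) m N hm1 hN
      calc ∑ n ∈ Finset.Icc m N,
            (Real.log^[K+1] (((n+1:ℕ)):ℝ) - Real.log^[K+1] ((n:ℕ):ℝ))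
          = ∑ n ∈ Finset.Icc m N,
            (Real.log^[K+1] (((n+1:ℕ)):ℝ) - Real.log^[K+1] (((n-1+1:ℕ)):ℝ)) :=
            Finset.sum_congr rfl (fun n hn => by
              have h1 : 1 ≤ n := le_trans hm1 (Finset.mem_Icc.mp hn).1
              rw [show n - 1 + 1 = n by omega])
        _ = Real.log^[K+1] (((N+1:ℕ)):ℝ) - Real.log^[K+1] (((m-1+1:ℕ)):ℝ) := e
        _ = Real.log^[K+1] (((N+1:ℕ)):ℝ) - Real.log^[K+1] ((m:ℕ):ℝ) := by
            rw [show m - 1 + 1 = m by omega]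
    calc c₁ * (Real.log^[K+1] ((N:ℝ)+1) - Real.log^[K+1] ((m:ℝ)))
        = ∑ n ∈ Finset.Icc m N,
            (c₁ * (Real.log^[K+1] (((n+1:ℕ)):ℝ) - Real.log^[K+1] ((n:ℕ):ℝ))) := by
          rw [← Finset.mul_sum, htel]
          push_cast
          ring_nf
      _ ≤ ∑ n ∈ Finset.Icc m N, ∏ k ∈ Finset.Icc 1 n, mu k / lam k :=
          Finset.sum_le_sum step
      _ ≤ _ := hsub
  -- limit
  have hlowtend : Tendsto
      (fun N : ℕ => c₁ * (Real.log^[K+1] ((N:ℝ)+1) - Real.log^[K+1] ((m:ℝ))))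
      atTop atTop := by
    apply Tendsto.const_mul_atTop hc₁pos
    simp only [sub_eq_add_neg]
    apply tendsto_atTop_add_const_right
    exact (RWaux.iterlog_tendsto (K+1)).comp
      (tendsto_atTop_add_const_right atTop (1:ℝ) tendsto_natCast_atTop_atTop)
  apply tendsto_atTop_mono' atTop _ hlowtend
  filter_upwards [eventually_ge_atTop m] with N hN
  exact hfinal N hN
end
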